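/- arXiv:2007.14363 — 3 statements merged into one kernel-verified Lean document; each statement's English description precedes it below -/
import Mathlib

section
/- For any bounded domain Ω ⊆ ℂⁿ, the squeezing function corresponding to the polydisk T_Ω : Ω → ℝ is continuous on Ω. -/
open Metric Set Matrix
open scoped ComplexOrder

noncomputable section

/-- The open polydisk of radius `r` centered at the origin in `ℂ^ι`:
`𝔻^ι(0,r) = { w : |wᵢ| < r for all i }`. -/
def polydisk (ι : Type*) [Fintype ι] (r : ℝ) : Set (EuclideanSpace ℂ ι) :=
  {w | ∀ i, ‖w i‖ < r}

/-- The squeezing function corresponding to the polydisk: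
`T_Ω(z) = sup { r > 0 : ∃ injective holomorphic f : Ω → 𝔻ⁿ, f z = 0, 𝔻ⁿ(0,r) ⊆ f(Ω) }`. -/
def squeezingT {ι : Type*} [Fintype ι] (Ω : Set (EuclideanSpace ℂ ι))
    (z : EuclideanSpace ℂ ι) : ℝ :=
  sSup {r : ℝ | 0 < r ∧ ∃ f : EuclideanSpace ℂ ι → EuclideanSpace ℂ ι,
    DifferentiableOn ℂ f Ω ∧ Set.InjOn f Ω ∧ f '' Ω ⊆ polydisk ι 1 ∧
    f z = 0 ∧ polydisk ι r ⊆ f '' Ω}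

/-- The squeezing function corresponding to the Euclidean unit ball:
`S_Ω(z) = sup { r > 0 : ∃ injective holomorphic f : Ω → Bⁿ, f z = 0, Bⁿ(0,r) ⊆ f(Ω) }`. -/
def squeezingS {ι : Type*} [Fintype ι] (Ω : Set (EuclideanSpace ℂ ι))
    (z : EuclideanSpace ℂ ι) : ℝ :=
  sSup {r : ℝ | 0 < r ∧ ∃ f : EuclideanSpace ℂ ι → EuclideanSpace ℂ ι,
    DifferentiableOn ℂ f Ω ∧ Set.InjOn f Ω ∧ f '' Ω ⊆ ball (0 : EuclideanSpace ℂ ι) 1 ∧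
    f z = 0 ∧ ball (0 : EuclideanSpace ℂ ι) r ⊆ f '' Ω}

/-- A bounded domain in `ℂ^ι`: a nonempty connected bounded open set. -/
def IsBoundedDomain {ι : Type*} [Fintype ι] (Ω : Set (EuclideanSpace ℂ ι)) : Prop :=
  IsOpen Ω ∧ IsConnected Ω ∧ Bornology.IsBounded Ω

/-- The `i`-th block of a vector in `ℂ^{n₁} × ⋯ × ℂ^{n_k}` viewed inside `ℂ^{n₁+⋯+n_k}`. -/
def blockOf {k : ℕ} {n : Fin k → ℕ} (z : EuclideanSpace ℂ ((i : Fin k) × Fin (n i)))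
    (i : Fin k) : EuclideanSpace ℂ (Fin (n i)) := WithLp.toLp 2 (fun j => z ⟨i, j⟩)

/-- The product `Ω₁ × ⋯ × Ω_k` viewed as a subset of `ℂ^{n₁+⋯+n_k}`. -/
def prodDomain {k : ℕ} {n : Fin k → ℕ} (Ω : ∀ i, Set (EuclideanSpace ℂ (Fin (n i)))) :
    Set (EuclideanSpace ℂ ((i : Fin k) × Fin (n i))) :=
  {z | ∀ i, blockOf z i ∈ Ω i}


noncomputable def mob (a u : ℂ) : ℂ := (u - a) / (1 - (starRingEnd ℂ) a * u)

lemma mob_denom_ne (a u : ℂ) (ha : ‖a‖ < 1) (hu : ‖u‖ < 1) :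
    1 - (starRingEnd ℂ) a * u ≠ 0 := by
  intro h
  have : ‖(starRingEnd ℂ) a * u‖ < 1 := by
    rw [norm_mul, Complex.norm_conj]
    nlinarith [norm_nonneg a, norm_nonneg u]
  rw [sub_eq_zero] at h
  rw [← h] at this
  simp at this

lemma mob_abs_lt (a u : ℂ) (ha : ‖a‖ < 1) (hu : ‖u‖ < 1) :
    ‖mob a u‖ < 1 := by
  have hd := mob_denom_ne a u ha hu
  rw [mob, norm_div, div_lt_one (norm_pos_iff.mpr hd)]
  have h1 : Complex.normSq (u - a) < Complex.normSq (1 - (starRingEnd ℂ) a * u) := by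
    have ha2 : Complex.normSq a < 1 := by rw [Complex.normSq_eq_norm_sq]; nlinarith [norm_nonneg a]
    have hu2 : Complex.normSq u < 1 := by rw [Complex.normSq_eq_norm_sq]; nlinarith [norm_nonneg u]
    simp only [Complex.normSq_apply, Complex.sub_re, Complex.sub_im, Complex.mul_re, Complex.mul_im,
      Complex.one_re, Complex.one_im, Complex.conj_re, Complex.conj_im] at *
    nlinarith
  rw [← Complex.sq_norm, ← Complex.sq_norm] at h1
  nlinarith [norm_nonneg (u - a), norm_nonneg (1 - (starRingEnd ℂ) a * u)]

lemma mob_inj (a u v : ℂ) (ha : ‖a‖ < 1) (hu : ‖u‖ < 1)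
    (hv : ‖v‖ < 1) (h : mob a u = mob a v) : u = v := by
  have hdu := mob_denom_ne a u ha hu
  have hdv := mob_denom_ne a v ha hv
  rw [mob, mob, div_eq_div_iff hdu hdv] at h
  have ha2 : Complex.normSq a < 1 := by rw [Complex.normSq_eq_norm_sq]; nlinarith [norm_nonneg a]
  have key : (u - v) * (1 - (starRingEnd ℂ) a * a) = 0 := by ring_nf; ring_nf at h; linear_combination h
  rcases mul_eq_zero.1 key with h' | h'
  · exact sub_eq_zero.1 h'
  · exfalso
    rw [sub_eq_zero] at h'
    have h2 : (Complex.normSq a : ℂ) = 1 := by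
      rw [← Complex.mul_conj]; linear_combination -h'
    have h3 : Complex.normSq a = 1 := by exact_mod_cast h2
    linarith

noncomputable def mobInv (a v : ℂ) : ℂ := (v + a) / (1 + (starRingEnd ℂ) a * v)

lemma mobInv_denom_ne (a v : ℂ) (h : ‖a‖ * ‖v‖ < 1) :
    1 + (starRingEnd ℂ) a * v ≠ 0 := by
  intro h0
  have h1 : ‖(starRingEnd ℂ) a * v‖ < 1 := by
    rw [norm_mul, Complex.norm_conj]; exact h
  have : (starRingEnd ℂ) a * v = -1 := by linear_combination h0
  rw [this] at h1; simp at h1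

lemma one_sub_abs_le (x : ℂ) : 1 - ‖x‖ ≤ ‖1 + x‖ := by
  have h := norm_add_le (1 + x) (-x)
  simp only [add_neg_cancel_right, norm_neg] at h
  have : ‖(1:ℂ)‖ = 1 := by simp
  linarith

lemma mobInv_abs_le (a v : ℂ) (h : ‖a‖ * ‖v‖ < 1) :
    ‖mobInv a v‖ ≤ (‖v‖ + ‖a‖) / (1 - ‖a‖ * ‖v‖) := by
  rw [mobInv, norm_div]
  apply div_le_div₀ (by positivity) (norm_add_le v a) (by linarith)
  calc 1 - ‖a‖ * ‖v‖
      = 1 - ‖(starRingEnd ℂ) a * v‖ := by simp [norm_mul, Complex.norm_conj]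
    _ ≤ ‖1 + (starRingEnd ℂ) a * v‖ := one_sub_abs_le _

lemma mob_mobInv (a v : ℂ) (ha : ‖a‖ < 1) (hv : ‖v‖ < 1) :
    mob a (mobInv a v) = v := by
  have hav : ‖a‖ * ‖v‖ < 1 := by
    nlinarith [norm_nonneg a, norm_nonneg v]
  have hd1 := mobInv_denom_ne a v hav
  have h1 : 1 - (starRingEnd ℂ) a * a ≠ 0 := by
    intro h
    rw [sub_eq_zero] at h
    have h2 : (Complex.normSq a : ℂ) = 1 := by rw [← Complex.mul_conj]; linear_combination -h
    have h3 : Complex.normSq a = 1 := by exact_mod_cast h2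
    have : ‖a‖ ^ 2 = 1 := by rw [Complex.sq_norm]; exact h3
    nlinarith [norm_nonneg a]
  have key : 1 - (starRingEnd ℂ) a * mobInv a v
      = (1 - (starRingEnd ℂ) a * a) / (1 + (starRingEnd ℂ) a * v) := by
    rw [mobInv]; field_simp; ring
  rw [mob, key, mobInv]
  rw [div_eq_iff (div_ne_zero h1 hd1)]
  have hd2 : 1 + v * (starRingEnd ℂ) a ≠ 0 := by rwa [mul_comm]
  field_simp
  ring

section main
variable {n : ℕ}

def TSet (Ω : Set (EuclideanSpace ℂ (Fin n))) (z : EuclideanSpace ℂ (Fin n)) : Set ℝ :=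
  {r : ℝ | 0 < r ∧ ∃ f : EuclideanSpace ℂ (Fin n) → EuclideanSpace ℂ (Fin n),
    DifferentiableOn ℂ f Ω ∧ Set.InjOn f Ω ∧ f '' Ω ⊆ polydisk (Fin n) 1 ∧
    f z = 0 ∧ polydisk (Fin n) r ⊆ f '' Ω}

lemma squeezingT_eq (Ω : Set (EuclideanSpace ℂ (Fin n))) (z : EuclideanSpace ℂ (Fin n)) :
    squeezingT Ω z = sSup (TSet Ω z) := rfl

lemma abs_coord_le_norm (x : EuclideanSpace ℂ (Fin n)) (i : Fin n) :
    ‖x i‖ ≤ ‖x‖ := by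
  rw [EuclideanSpace.norm_eq]
  have h1 : ‖x i‖ = ‖x i‖ := rfl
  rw [h1]
  rw [Real.le_sqrt (norm_nonneg _)]
  exact Finset.single_le_sum (f := fun j => ‖x j‖ ^ 2) (fun j _ => by positivity)
    (Finset.mem_univ i)
  exact Finset.sum_nonneg fun j _ => sq_nonneg _

lemma TSet_le_one (hn : 0 < n) {Ω : Set (EuclideanSpace ℂ (Fin n))}
    {z : EuclideanSpace ℂ (Fin n)} {r : ℝ} (hr : r ∈ TSet Ω z) : r ≤ 1 := by
  by_contra h
  push_neg at h
  obtain ⟨hr0, f, hdf, hinj, himg, hfz, hcov⟩ := hr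
  have hw : (WithLp.toLp 2 (fun _ => (1:ℂ)) : EuclideanSpace ℂ (Fin n)) ∈ polydisk (Fin n) r := by
    intro i; simpa using h
  have := himg (hcov hw)
  have := this ⟨0, hn⟩
  simp at this

lemma TSet_bddAbove (hn : 0 < n) (Ω : Set (EuclideanSpace ℂ (Fin n)))
    (z : EuclideanSpace ℂ (Fin n)) : BddAbove (TSet Ω z) :=
  ⟨1, fun _ hr => TSet_le_one hn hr⟩

lemma TSet_nonempty (hn : 0 < n) {Ω : Set (EuclideanSpace ℂ (Fin n))}
    (hΩo : IsOpen Ω) (hΩb : Bornology.IsBounded Ω) {z : EuclideanSpace ℂ (Fin n)}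
    (hz : z ∈ Ω) : ∃ r, r ∈ TSet Ω z := by
  obtain ⟨M0, hM0⟩ := hΩb.subset_ball z
  set M : ℝ := max M0 1 with hMdef
  have hM1 : (1:ℝ) ≤ M := le_max_right _ _
  have hMpos : (0:ℝ) < M := lt_of_lt_of_le one_pos hM1
  have hM : Ω ⊆ ball z M := hM0.trans (ball_subset_ball (le_max_left _ _))
  obtain ⟨ρ, hρpos, hρ⟩ := Metric.isOpen_iff.1 hΩo z hz
  have hMC : (M:ℂ) ≠ 0 := by exact_mod_cast hMpos.ne'
  refine ⟨ρ / (M * (n+1)), by positivity, fun x => (M:ℂ)⁻¹ • (x - z), ?_, ?_, ?_, ?_, ?_⟩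
  · exact ((differentiable_id.sub_const z).const_smul ((M:ℂ)⁻¹)).differentiableOn
  · intro x hx y hy h
    have := smul_right_injective (EuclideanSpace ℂ (Fin n)) (inv_ne_zero hMC) h
    exact sub_left_injective this
  · rintro _ ⟨x, hx, rfl⟩ i
    have h1 : ‖((M:ℂ)⁻¹ • (x - z) : EuclideanSpace ℂ (Fin n)) i‖
        = M⁻¹ * ‖(x - z) i‖ := by
      have : ((M:ℂ)⁻¹ • (x - z) : EuclideanSpace ℂ (Fin n)) i = (M:ℂ)⁻¹ * (x - z) i := rfl
      rw [this, norm_mul, norm_inv]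
      simp [Complex.norm_real, abs_of_pos hMpos]
    rw [h1]
    have h2 : ‖(x - z) i‖ ≤ ‖x - z‖ := abs_coord_le_norm _ i
    have h3 : ‖x - z‖ < M := by
      have := hM hx
      rwa [mem_ball, dist_eq_norm] at this
    calc M⁻¹ * ‖(x - z) i‖ ≤ M⁻¹ * ‖x - z‖ := by
          apply mul_le_mul_of_nonneg_left h2 (by positivity)
      _ < M⁻¹ * M := by apply mul_lt_mul_of_pos_left h3 (by positivity)
      _ = 1 := inv_mul_cancel₀ hMpos.ne'
  · simp
  · intro v hv
    set r : ℝ := ρ / (M * (n+1)) with hrdef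
    have hrpos : 0 < r := by positivity
    have hnorm : ‖v‖ ≤ n * r := by
      have h1 : ‖v‖ = Real.sqrt (∑ i, ‖v i‖ ^ 2) := EuclideanSpace.norm_eq v
      have h2 : (∑ i, ‖v i‖ ^ 2) ≤ (n:ℝ) * r ^ 2 := by
        calc (∑ i, ‖v i‖ ^ 2) ≤ ∑ _i : Fin n, r ^ 2 := by
              apply Finset.sum_le_sum
              intro i _
              have h7 := (hv i).le
              have h0 : (0:ℝ) ≤ ‖v i‖ := norm_nonneg _
              have h8 : ‖v i‖ = ‖v i‖ := rfl
              nlinarith [h7]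
            _ = (n:ℝ) * r ^ 2 := by simp [Finset.sum_const]
      rw [h1]
      have h3 : Real.sqrt (∑ i, ‖v i‖ ^ 2) ≤ Real.sqrt ((n:ℝ) * r ^ 2) :=
        Real.sqrt_le_sqrt h2
      have h4 : Real.sqrt ((n:ℝ) * r ^ 2) = Real.sqrt n * r := by
        rw [Real.sqrt_mul (Nat.cast_nonneg n), Real.sqrt_sq hrpos.le]
      have h5 : Real.sqrt (n:ℝ) ≤ n := by
        have := Real.sq_sqrt (Nat.cast_nonneg n : (0:ℝ) ≤ n)
        have h6 := Real.sqrt_nonneg (n:ℝ)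
        rcases Nat.eq_zero_or_pos n with h | h
        · simp [h]
        · have : (1:ℝ) ≤ n := by exact_mod_cast h
          nlinarith
      calc Real.sqrt (∑ i, ‖v i‖ ^ 2) ≤ Real.sqrt n * r := h3.trans_eq h4
        _ ≤ n * r := by nlinarith
    refine ⟨z + (M:ℂ) • v, ?_, ?_⟩
    · apply hρ
      rw [mem_ball, dist_eq_norm]
      have : z + (M:ℂ) • v - z = (M:ℂ) • v := by abel
      rw [this, norm_smul]
      have hMn : ‖(M:ℂ)‖ = M := by
        rw [Complex.norm_real, Real.norm_eq_abs, abs_of_pos hMpos]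
      rw [hMn]
      calc M * ‖v‖ ≤ M * (n * r) := by
            apply mul_le_mul_of_nonneg_left hnorm hMpos.le
        _ = ρ * (n / (n+1)) := by
            rw [hrdef]; field_simp
        _ < ρ := by
            have : (n:ℝ) / (n+1) < 1 := by
              rw [div_lt_one (by positivity)]; linarith
            nlinarith
    · show (M:ℂ)⁻¹ • (z + (M:ℂ) • v - z) = v
      have : z + (M:ℂ) • v - z = (M:ℂ) • v := by abel
      rw [this, smul_smul, inv_mul_cancel₀ hMC, one_smul]

lemma squeezingT_pos (hn : 0 < n) {Ω : Set (EuclideanSpace ℂ (Fin n))}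
    (hΩo : IsOpen Ω) (hΩb : Bornology.IsBounded Ω) {z : EuclideanSpace ℂ (Fin n)}
    (hz : z ∈ Ω) : 0 < squeezingT Ω z := by
  obtain ⟨r, hr⟩ := TSet_nonempty hn hΩo hΩb hz
  exact lt_of_lt_of_le hr.1 (le_csSup (TSet_bddAbove hn Ω z) hr)


lemma schwarz_bound {Ω : Set (EuclideanSpace ℂ (Fin n))}
    {f : EuclideanSpace ℂ (Fin n) → EuclideanSpace ℂ (Fin n)}
    {z w : EuclideanSpace ℂ (Fin n)} {R : ℝ} (hR : 0 < R) (hball : ball z R ⊆ Ω)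
    (hdf : DifferentiableOn ℂ f Ω) (himg : f '' Ω ⊆ polydisk (Fin n) 1)
    (hfz : f z = 0) (hw : w ∈ ball z R) (i : Fin n) :
    ‖f w i‖ ≤ ‖w - z‖ / R := by
  rcases eq_or_ne w z with rfl | hne
  · have : f w i = 0 := by rw [hfz]; rfl
    rw [this]
    simp only [norm_zero]
    positivity
  · set d : ℝ := ‖w - z‖ with hd
    have hdpos : 0 < d := by
      rw [hd, norm_pos_iff]
      exact sub_ne_zero.2 hne
    set ρ : ℝ := R / d with hρ
    have hρ1 : 1 < ρ := by
      rw [hρ, lt_div_iff₀ hdpos, one_mul]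
      rwa [mem_ball, dist_eq_norm] at hw
    set L : ℂ → EuclideanSpace ℂ (Fin n) := fun t => z + t • (w - z) with hL
    have hLdiff : Differentiable ℂ L := (differentiable_id.smul_const (w - z)).const_add z
    have hLmaps : ∀ t : ℂ, t ∈ ball (0:ℂ) ρ → L t ∈ ball z R := by
      intro t ht
      rw [mem_ball, dist_eq_norm]
      have h1 : L t - z = t • (w - z) := add_sub_cancel_left z _
      rw [h1, norm_smul]
      rw [mem_ball_zero_iff] at ht
      calc ‖t‖ * ‖w - z‖ < ρ * d := by
            apply mul_lt_mul_of_nonneg_of_pos ht le_rfl (norm_nonneg t) hdpos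
        _ = R := by rw [hρ]; field_simp
    set g : ℂ → ℂ := fun t => f (L t) i with hg
    have hgdiff : DifferentiableOn ℂ g (ball (0:ℂ) ρ) := by
      have h2 : DifferentiableOn ℂ (f ∘ L) (ball (0:ℂ) ρ) :=
        hdf.comp hLdiff.differentiableOn (fun t ht => hball (hLmaps t ht))
      exact (EuclideanSpace.proj (𝕜 := ℂ) i).differentiable.comp_differentiableOn h2
    have hg0 : g 0 = 0 := by
      have : L 0 = z := by rw [hL]; simp
      rw [hg]
      simp only [this, hfz]
      rfl
    have hgmaps : MapsTo g (ball (0:ℂ) ρ) (ball (g 0) 1) := by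
      intro t ht
      rw [hg0, mem_ball_zero_iff]
      have := himg ⟨L t, hball (hLmaps t ht), rfl⟩ i
      exact this
    have h1mem : (1:ℂ) ∈ ball (0:ℂ) ρ := by
      rw [mem_ball_zero_iff]
      simpa using hρ1
    have key := Complex.dist_le_div_mul_dist_of_mapsTo_ball hgdiff (hgmaps.mono_right ball_subset_closedBall) h1mem
    have hg1 : g 1 = f w i := by
      have h9 : L 1 = w := by rw [hL]; simp
      simp only [hg]
      rw [h9]
    rw [hg1, hg0] at key
    have hdist : dist (f w i) (0:ℂ) = ‖f w i‖ := by
      rw [dist_eq_norm, sub_zero]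
    have hdist2 : dist (1:ℂ) (0:ℂ) = 1 := by simp
    rw [hdist, hdist2] at key
    calc ‖f w i‖ ≤ 1 / ρ * 1 := key
      _ = d / R := by rw [hρ]; field_simp


lemma step (hn : 0 < n) {Ω : Set (EuclideanSpace ℂ (Fin n))}
    {z w : EuclideanSpace ℂ (Fin n)} {R r s : ℝ} (hR : 0 < R) (hball : ball z R ⊆ Ω)
    (hw : w ∈ Ω) (hwz : ‖w - z‖ < R) (hr : r ∈ TSet Ω z) (hs : 0 < s)
    (hs' : s < (r - ‖w - z‖ / R) / (1 + r * (‖w - z‖ / R))) : s ∈ TSet Ω w := by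
  obtain ⟨hr0, f, hdf, hinj, himg, hfz, hcov⟩ := hr
  set α : ℝ := ‖w - z‖ / R with hαdef
  have hα0 : 0 ≤ α := by positivity
  have hα1 : α < 1 := by rw [hαdef, div_lt_one hR]; exact hwz
  have hr1 : r ≤ 1 := TSet_le_one hn ⟨hr0, f, hdf, hinj, himg, hfz, hcov⟩
  have hrα : 0 < 1 + r * α := by positivity
  have hs1 : s < 1 := by
    have h1 : (r - α) / (1 + r * α) ≤ r := by
      rw [div_le_iff₀ hrα]
      nlinarith [mul_nonneg (mul_nonneg hr0.le hr0.le) hα0]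
    linarith
  have hsα : 0 < 1 - s * α := by nlinarith
  have hsr : (s + α) / (1 - s * α) < r := by
    rw [div_lt_iff₀ hsα]
    rw [lt_div_iff₀ hrα] at hs'
    nlinarith
  have ha : ∀ i, ‖f w i‖ < 1 := fun i => himg ⟨w, hw, rfl⟩ i
  have haα : ∀ i, ‖f w i‖ ≤ α := fun i =>
    schwarz_bound hR hball hdf himg hfz (by rwa [mem_ball, dist_eq_norm]) i
  set F : EuclideanSpace ℂ (Fin n) → EuclideanSpace ℂ (Fin n) :=
    fun x => WithLp.toLp 2 (fun i => mob (f w i) (f x i)) with hF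
  refine ⟨hs, F, ?_, ?_, ?_, ?_, ?_⟩
  · rw [differentiableOn_piLp]
    intro i
    have hfi : DifferentiableOn ℂ (fun x => f x i) Ω :=
      (EuclideanSpace.proj (𝕜 := ℂ) i).differentiable.comp_differentiableOn hdf
    show DifferentiableOn ℂ
      (fun x => (f x i - f w i) / (1 - (starRingEnd ℂ) (f w i) * f x i)) Ω
    have hden : DifferentiableOn ℂ
        (fun x => 1 - (starRingEnd ℂ) (f w i) * f x i) Ω :=
      (differentiableOn_const _).sub (hfi.const_mul _)
    simp only [div_eq_mul_inv]
    exact (hfi.sub_const _).mul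
      (hden.inv (fun x hx => mob_denom_ne _ _ (ha i) (himg ⟨x, hx, rfl⟩ i)))
  · intro x hx y hy h
    apply hinj hx hy
    exact PiLp.ext fun i => mob_inj (f w i) _ _ (ha i) (himg ⟨x, hx, rfl⟩ i)
      (himg ⟨y, hy, rfl⟩ i) (congrArg (fun p => p i) h)
  · rintro _ ⟨x, hx, rfl⟩ i
    exact mob_abs_lt _ _ (ha i) (himg ⟨x, hx, rfl⟩ i)
  · ext i
    show mob (f w i) (f w i) = 0
    rw [mob, sub_self, zero_div]
  · intro v hv
    set u : EuclideanSpace ℂ (Fin n) := WithLp.toLp 2 (fun i => mobInv (f w i) (v i)) with hu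
    have hui : ∀ i, ‖u i‖ < r := by
      intro i
      have hv1 : ‖v i‖ < s := hv i
      have hav : ‖f w i‖ * ‖v i‖ < 1 := by
        nlinarith [norm_nonneg (f w i), norm_nonneg (v i), ha i]
      have h1 := mobInv_abs_le (f w i) (v i) hav
      have h2 : (‖v i‖ + ‖f w i‖) /
          (1 - ‖f w i‖ * ‖v i‖) ≤ (s + α) / (1 - s * α) := by
        apply div_le_div₀ (by positivity) (by nlinarith [haα i]) hsα
        nlinarith [haα i, norm_nonneg (v i), norm_nonneg (f w i)]
      calc ‖u i‖ ≤ _ := h1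
        _ ≤ (s + α) / (1 - s * α) := h2
        _ < r := hsr
    obtain ⟨x, hx, hfx⟩ := hcov (fun i => hui i)
    refine ⟨x, hx, ?_⟩
    ext i
    show mob (f w i) (f x i) = v i
    rw [show f x i = u i from congrArg (fun p => p i) hfx]
    exact mob_mobInv _ _ (ha i) (lt_trans (hv i) hs1)


lemma main_est (hn : 0 < n) {Ω : Set (EuclideanSpace ℂ (Fin n))} (hΩo : IsOpen Ω)
    (hΩb : Bornology.IsBounded Ω) {z w : EuclideanSpace ℂ (Fin n)} {R : ℝ}
    (hR : 0 < R) (hball : ball z R ⊆ Ω) (hz : z ∈ Ω) (hw : w ∈ Ω) (hwz : ‖w - z‖ < R) :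
    squeezingT Ω z ≤ squeezingT Ω w + 2 * (‖w - z‖ / R) := by
  set α : ℝ := ‖w - z‖ / R with hαdef
  have hα0 : 0 ≤ α := by positivity
  have hα1 : α < 1 := by rw [hαdef, div_lt_one hR]; exact hwz
  have hTw : 0 < squeezingT Ω w := squeezingT_pos hn hΩo hΩb hw
  rw [squeezingT_eq]
  apply csSup_le (Set.nonempty_def.2 (TSet_nonempty hn hΩo hΩb hz))
  intro r hr
  have hr0 : 0 < r := hr.1
  have hr1 : r ≤ 1 := TSet_le_one hn hr
  have hrα : 0 < 1 + r * α := by positivity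
  have claim : (r - α) / (1 + r * α) ≤ squeezingT Ω w := by
    by_contra hcon
    push_neg at hcon
    set s : ℝ := (squeezingT Ω w + (r - α) / (1 + r * α)) / 2 with hsdef
    have hs0 : 0 < s := by rw [hsdef]; linarith
    have hs2 : s < (r - α) / (1 + r * α) := by rw [hsdef]; linarith
    have hmem : s ∈ TSet Ω w := step hn hR hball hw hwz hr hs0 hs2
    have := le_csSup (TSet_bddAbove hn Ω w) hmem
    rw [← squeezingT_eq] at this
    rw [hsdef] at this
    linarith
  have h2 : r - α ≤ squeezingT Ω w * (1 + r * α) := by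
    rw [← div_le_iff₀ hrα]
    exact claim
  nlinarith [mul_nonneg hα0 (sub_nonneg.2 hr1), mul_nonneg (mul_nonneg hα0 hα0) hr0.le,
    mul_nonneg hα0 hr0.le, mul_pos hTw hrα, mul_nonneg hTw.le (mul_nonneg hr0.le hα0)]


end main

/-- For any bounded domain `Ω ⊆ ℂⁿ`, the squeezing function corresponding to the polydisk
`T_Ω` is continuous on `Ω`. -/
theorem squeezingT_continuousOn (n : ℕ) (hn : 0 < n)
    (Ω : Set (EuclideanSpace ℂ (Fin n))) (hΩ : IsBoundedDomain Ω) :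
    ContinuousOn (squeezingT Ω) Ω := by
  obtain ⟨hΩo, -, hΩb⟩ := hΩ
  intro z hz
  rw [Metric.continuousWithinAt_iff]
  intro ε hε
  obtain ⟨R, hRpos, hball⟩ := Metric.isOpen_iff.1 hΩo z hz
  refine ⟨min (R/2) (ε * R / 16), by positivity, ?_⟩
  intro w hwΩ hdist
  have hd2 : dist w z < R / 2 := lt_of_lt_of_le hdist (min_le_left _ _)
  have hd3 : dist w z < ε * R / 16 := lt_of_lt_of_le hdist (min_le_right _ _)
  have hwz : ‖w - z‖ < R / 2 := by rwa [dist_eq_norm] at hd2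
  have hwzR : ‖w - z‖ < R := by linarith
  have hzw : ‖z - w‖ = ‖w - z‖ := norm_sub_rev z w
  have hball2 : ball w (R / 2) ⊆ Ω := by
    intro x hx
    apply hball
    rw [mem_ball] at hx ⊢
    calc dist x z ≤ dist x w + dist w z := dist_triangle x w z
      _ < R / 2 + R / 2 := by exact add_lt_add hx hd2
      _ = R := by ring
  have est1 : squeezingT Ω z ≤ squeezingT Ω w + 2 * (‖w - z‖ / R) :=
    main_est hn hΩo hΩb hRpos hball hz hwΩ hwzR
  have est2 : squeezingT Ω w ≤ squeezingT Ω z + 2 * (‖z - w‖ / (R / 2)) :=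
    main_est hn hΩo hΩb (by positivity) hball2 hwΩ hz (by rw [hzw]; linarith)
  rw [Real.dist_eq, abs_lt]
  have hnn : ‖w - z‖ = dist w z := (dist_eq_norm w z).symm
  constructor
  · have h9 : dist w z / R < ε / 16 := by
      rw [div_lt_iff₀ hRpos]; nlinarith
    have : 2 * (‖w - z‖ / R) < ε / 2 := by rw [hnn]; linarith
    linarith
  · have h8 : (0:ℝ) < R / 2 := by positivity
    have h9 : dist w z / (R / 2) < ε / 8 := by
      rw [div_lt_iff₀ h8]; nlinarith
    have : 2 * (‖z - w‖ / (R / 2)) < ε / 2 := by rw [hzw, hnn]; linarith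
    linarith
end
end

section
/- Let Ω₁,…,Ω_k with Ω_i ⊆ ℂ^{n_i} be bounded domains and let Ω = Ω₁ × Ω₂ × ⋯ × Ω_k ⊆ ℂⁿ, where n = n₁ + n₂ + ⋯ + n_k. Then for any a = (a₁, a₂, …, a_k) ∈ Ω with a_i ∈ Ω_i, one has S_Ω(a) ≥ [ (S_{Ω₁}(a₁))^{−2} + (S_{Ω₂}(a₂))^{−2} + ⋯ + (S_{Ω_k}(a_k))^{−2} ]^{−1/2}. -/
open Metric Set Matrix
open scoped ComplexOrder

noncomputable section

section Aux

def sqSet {ι : Type*} [Fintype ι] (Ω : Set (EuclideanSpace ℂ ι)) (z : EuclideanSpace ℂ ι) :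
    Set ℝ :=
  {r : ℝ | 0 < r ∧ ∃ f : EuclideanSpace ℂ ι → EuclideanSpace ℂ ι,
    DifferentiableOn ℂ f Ω ∧ Set.InjOn f Ω ∧ f '' Ω ⊆ ball (0 : EuclideanSpace ℂ ι) 1 ∧
    f z = 0 ∧ ball (0 : EuclideanSpace ℂ ι) r ⊆ f '' Ω}

variable {ι : Type*} [Fintype ι]

lemma sqSet_bddAbove [Nonempty ι] (Ω : Set (EuclideanSpace ℂ ι)) (z : EuclideanSpace ℂ ι) :
    BddAbove (sqSet Ω z) := by
  haveI := Classical.decEq ι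
  refine ⟨1, fun r hr => ?_⟩
  obtain ⟨hr0, f, _, _, him, _, hball⟩ := hr
  by_contra h
  push_neg at h
  set x : EuclideanSpace ℂ ι :=
    EuclideanSpace.single (Classical.arbitrary ι) (((1 + r) / 2 : ℝ) : ℂ) with hxdef
  have hx : ‖x‖ = (1 + r) / 2 := by
    rw [hxdef, EuclideanSpace.norm_single, Complex.norm_real, Real.norm_eq_abs]
    exact abs_of_pos (by linarith)
  have hx1 : x ∈ ball (0 : EuclideanSpace ℂ ι) r := mem_ball_zero_iff.2 (by rw [hx]; linarith)
  have := him (hball hx1)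
  rw [mem_ball_zero_iff, hx] at this
  linarith

lemma sqSet_mono {Ω : Set (EuclideanSpace ℂ ι)} {z : EuclideanSpace ℂ ι} {r s : ℝ}
    (hs : s ∈ sqSet Ω z) (h0 : 0 < r) (hrs : r ≤ s) : r ∈ sqSet Ω z := by
  obtain ⟨hs0, f, h1, h2, h3, h4, h5⟩ := hs
  exact ⟨h0, f, h1, h2, h3, h4, (ball_subset_ball hrs).trans h5⟩

lemma sqSet_exists_pos (Ω : Set (EuclideanSpace ℂ ι)) (hopen : IsOpen Ω)
    (hbdd : Bornology.IsBounded Ω) {z : EuclideanSpace ℂ ι} (hz : z ∈ Ω) :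
    ∃ r, r ∈ sqSet Ω z := by
  obtain ⟨M, hM⟩ := hbdd.subset_closedBall 0
  set C : ℝ := |M| + ‖z‖ + 1 with hC
  have hC0 : 0 < C := by positivity
  obtain ⟨δ, hδ0, hδ⟩ := Metric.isOpen_iff.1 hopen z hz
  have h2C : ((2 * C : ℝ) : ℂ) ≠ 0 := by
    simp only [ne_eq, Complex.ofReal_eq_zero]; positivity
  refine ⟨δ / (2 * C), by positivity, fun x => (((2 * C : ℝ))⁻¹ : ℂ) • (x - z), ?_, ?_, ?_, ?_, ?_⟩
  · exact ((((differentiable_id (𝕜 := ℂ)).sub_const z).const_smul ((((2 * C : ℝ))⁻¹ : ℂ))).differentiableOn)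
  · intro x hx y hy hxy
    have : x - z = y - z := by
      have := smul_right_injective (EuclideanSpace ℂ ι) (inv_ne_zero h2C) hxy
      exact this
    simpa using this
  · rintro w ⟨x, hx, rfl⟩
    rw [mem_ball_zero_iff, norm_smul]
    have hxz : ‖x - z‖ ≤ C - 1 := by
      have h1 : ‖x‖ ≤ M := by simpa using hM hx
      have h2 : ‖x - z‖ ≤ ‖x‖ + ‖z‖ := norm_sub_le _ _
      have h3 : M ≤ |M| := le_abs_self M
      simp only [hC]; linarith
    have hn : ‖(((2 * C : ℝ))⁻¹ : ℂ)‖ = (2 * C)⁻¹ := by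
      rw [norm_inv, Complex.norm_real, Real.norm_eq_abs]
      rw [abs_of_pos (show (0:ℝ) < 2 * C by positivity)]
    rw [hn]
    calc (2 * C)⁻¹ * ‖x - z‖ ≤ (2 * C)⁻¹ * (C - 1) := by
          apply mul_le_mul_of_nonneg_left hxz (by positivity)
      _ < 1 := by
          rw [inv_mul_lt_iff₀ (by positivity)]; nlinarith
  · simp
  · intro w hw
    rw [mem_ball_zero_iff] at hw
    refine ⟨z + ((2 * C : ℝ) : ℂ) • w, ?_, ?_⟩
    · apply hδ
      rw [mem_ball_iff_norm]
      have : ‖((2 * C : ℝ) : ℂ)‖ = 2 * C := by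
        rw [Complex.norm_real, Real.norm_eq_abs]
        exact abs_of_pos (by positivity)
      rw [add_sub_cancel_left, norm_smul, this]
      calc 2 * C * ‖w‖ < 2 * C * (δ / (2 * C)) := by
            apply mul_lt_mul_of_pos_left hw (by positivity)
        _ = δ := by field_simp
    · show (((2 * C : ℝ) : ℂ))⁻¹ • (z + ((2 * C : ℝ) : ℂ) • w - z) = w
      rw [add_sub_cancel_left, smul_smul, inv_mul_cancel₀ h2C, one_smul]

lemma sqSet_of_isEmpty [IsEmpty ι] (Ω : Set (EuclideanSpace ℂ ι)) {z : EuclideanSpace ℂ ι}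
    (hz : z ∈ Ω) {s : ℝ} (hs : 0 < s) : s ∈ sqSet Ω z := by
  haveI : Subsingleton (EuclideanSpace ℂ ι) := ⟨fun a b => PiLp.ext fun j => isEmptyElim j⟩
  refine ⟨hs, id, differentiableOn_id, injOn_id Ω, ?_, Subsingleton.elim _ _, ?_⟩
  · rintro w ⟨x, hx, rfl⟩
    rw [mem_ball_zero_iff]
    rw [Subsingleton.elim (id x) 0, norm_zero]; exact one_pos
  · intro w hw
    rw [image_id]
    rwa [Subsingleton.elim w z]

lemma sqSet_pos {ι : Type*} [Fintype ι] {Ω : Set (EuclideanSpace ℂ ι)} {z : EuclideanSpace ℂ ι}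
    {r : ℝ} (h : r ∈ sqSet Ω z) : 0 < r := h.1



lemma sqSet_exists_close (Ω : Set (EuclideanSpace ℂ ι)) (hopen : IsOpen Ω)
    (hbdd : Bornology.IsBounded Ω) {z : EuclideanSpace ℂ ι} (hz : z ∈ Ω) {ε : ℝ} (hε : 0 < ε) :
    ∃ r ∈ sqSet Ω z, (r⁻¹) ^ 2 < ((sSup (sqSet Ω z))⁻¹) ^ 2 + ε := by
  by_cases hb : BddAbove (sqSet Ω z)
  · obtain ⟨r₀, hr₀⟩ := sqSet_exists_pos Ω hopen hbdd hz
    set S := sSup (sqSet Ω z) with hSdef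
    have hS0 : 0 < S := lt_of_lt_of_le (sqSet_pos hr₀) (le_csSup hb hr₀)
    set v : ℝ := (Real.sqrt ((S⁻¹) ^ 2 + ε))⁻¹ with hvdef
    have hsq : 0 < Real.sqrt ((S⁻¹) ^ 2 + ε) := Real.sqrt_pos.2 (by positivity)
    have hvpos : 0 < v := inv_pos.2 hsq
    have h1 : S⁻¹ < Real.sqrt ((S⁻¹) ^ 2 + ε) := by
      nth_rewrite 1 [show S⁻¹ = Real.sqrt ((S⁻¹) ^ 2) from (Real.sqrt_sq (by positivity)).symm]
      exact Real.sqrt_lt_sqrt (by positivity) (by linarith)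
    have hvS : v < S := by
      rw [hvdef]
      calc (Real.sqrt ((S⁻¹) ^ 2 + ε))⁻¹ < (S⁻¹)⁻¹ := inv_strictAnti₀ (by positivity) h1
        _ = S := inv_inv S
    obtain ⟨r, hr, hvr⟩ := exists_lt_of_lt_csSup ⟨r₀, hr₀⟩ hvS
    refine ⟨r, hr, ?_⟩
    have h2 : r⁻¹ < v⁻¹ := inv_strictAnti₀ hvpos hvr
    have h3 : (v⁻¹) ^ 2 = (S⁻¹) ^ 2 + ε := by
      rw [hvdef, inv_inv, Real.sq_sqrt (by positivity)]
    calc (r⁻¹) ^ 2 < (v⁻¹) ^ 2 := by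
          apply pow_lt_pow_left₀ h2 (inv_nonneg.2 (sqSet_pos hr).le) two_ne_zero
      _ = (S⁻¹) ^ 2 + ε := h3
  · rw [Real.sSup_of_not_bddAbove hb]
    obtain ⟨r, hr, hgt⟩ := not_bddAbove_iff.1 hb (Real.sqrt ε)⁻¹
    refine ⟨r, hr, ?_⟩
    have hsq : 0 < Real.sqrt ε := Real.sqrt_pos.2 hε
    have h2 : r⁻¹ < Real.sqrt ε := by
      rw [show Real.sqrt ε = ((Real.sqrt ε)⁻¹)⁻¹ from (inv_inv _).symm]
      exact inv_strictAnti₀ (by positivity) hgt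
    calc (r⁻¹) ^ 2 < (Real.sqrt ε) ^ 2 := by
          apply pow_lt_pow_left₀ h2 (inv_nonneg.2 (sqSet_pos hr).le) two_ne_zero
      _ = ε := Real.sq_sqrt hε.le
      _ = ((0 : ℝ)⁻¹) ^ 2 + ε := by simp

def blockCLM {k : ℕ} (n : Fin k → ℕ) (i : Fin k) :
    EuclideanSpace ℂ ((i : Fin k) × Fin (n i)) →L[ℂ] EuclideanSpace ℂ (Fin (n i)) :=
  LinearMap.toContinuousLinearMap
    { toFun := fun z => blockOf z i
      map_add' := fun _ _ => rfl
      map_smul' := fun _ _ => by ext j; rfl }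

@[simp] lemma blockCLM_apply {k : ℕ} (n : Fin k → ℕ) (i : Fin k)
    (z : EuclideanSpace ℂ ((i : Fin k) × Fin (n i))) : blockCLM n i z = blockOf z i := rfl

lemma norm_sq_eq_sum {ι : Type*} [Fintype ι] (x : EuclideanSpace ℂ ι) :
    ‖x‖ ^ 2 = ∑ i, ‖x i‖ ^ 2 := by
  rw [EuclideanSpace.norm_eq, Real.sq_sqrt (by positivity)]

lemma construction {k : ℕ} (hk : 0 < k) {n : Fin k → ℕ}
    (Ω : ∀ i, Set (EuclideanSpace ℂ (Fin (n i))))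
    (a : EuclideanSpace ℂ ((i : Fin k) × Fin (n i))) (ha : a ∈ prodDomain Ω)
    {c : ℝ} (hc : 0 < c) {r : Fin k → ℝ}
    (hr : ∀ i, r i ∈ sqSet (Ω i) (blockOf a i))
    (hsum : ∑ i, c ^ 2 * ((r i)⁻¹) ^ 2 ≤ 1) :
    c ∈ sqSet (prodDomain Ω) a := by
  haveI : Nonempty (Fin k) := ⟨⟨0, hk⟩⟩
  have hrpos : ∀ i, 0 < r i := fun i => (hr i).1
  choose f hdiff hinj him hfa hball using fun i => (hr i).2
  set t : Fin k → ℝ := fun i => c / r i with htdef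
  have htpos : ∀ i, 0 < t i := fun i => div_pos hc (hrpos i)
  have htC : ∀ i, ((t i : ℝ) : ℂ) ≠ 0 := fun i => Complex.ofReal_ne_zero.2 (htpos i).ne'
  set F : EuclideanSpace ℂ ((i : Fin k) × Fin (n i)) →
      EuclideanSpace ℂ ((i : Fin k) × Fin (n i)) :=
    fun z => (WithLp.toLp 2 (fun p : (i : Fin k) × Fin (n i) => ((t p.1 : ℝ) : ℂ) * f p.1 (blockOf z p.1) p.2) :
      EuclideanSpace ℂ ((i : Fin k) × Fin (n i))) with hFdef
  have hFapp : ∀ z p, F z p = ((t p.1 : ℝ) : ℂ) * f p.1 (blockOf z p.1) p.2 := fun z p => rfl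
  -- norm of F z
  have hFnorm : ∀ z, ‖F z‖ ^ 2 = ∑ i, (t i) ^ 2 * ‖f i (blockOf z i)‖ ^ 2 := by
    intro z
    rw [norm_sq_eq_sum, ← Finset.univ_sigma_univ, Finset.sum_sigma]
    refine Finset.sum_congr rfl fun i _ => ?_
    rw [norm_sq_eq_sum, Finset.mul_sum]
    refine Finset.sum_congr rfl fun j _ => ?_
    rw [hFapp, norm_mul, mul_pow, Complex.norm_real, Real.norm_eq_abs,
      abs_of_pos (htpos i)]
  refine ⟨hc, F, ?_, ?_, ?_, ?_, ?_⟩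
  · -- differentiable
    have heq : F = (PiLp.continuousLinearEquiv 2 ℂ
        (fun _ : (i : Fin k) × Fin (n i) => ℂ)).symm ∘
        (fun z p => ((t p.1 : ℝ) : ℂ) * f p.1 (blockOf z p.1) p.2) := rfl
    rw [heq, ContinuousLinearEquiv.comp_differentiableOn_iff, differentiableOn_pi]
    intro p
    have h2 : DifferentiableOn ℂ (fun z => f p.1 (blockCLM n p.1 z)) (prodDomain Ω) :=
      (hdiff p.1).comp ((blockCLM n p.1).differentiable.differentiableOn)
        (fun z hz => hz p.1)
    have h3 := (EuclideanSpace.proj (𝕜 := ℂ) p.2).differentiable.comp_differentiableOn h2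
    have h4 : DifferentiableOn ℂ
        (fun z => f p.1 (blockOf z p.1) p.2) (prodDomain Ω) := h3
    exact h4.const_mul _
  · -- injective
    intro z hz w hw hzw
    have hblock : ∀ i, blockOf z i = blockOf w i := by
      intro i
      apply hinj i (hz i) (hw i)
      ext j
      have h1 := congrArg (fun v => v ⟨i, j⟩) hzw
      rw [hFapp, hFapp] at h1
      exact mul_left_cancel₀ (htC i) h1
    ext p
    exact congrArg (fun v => v p.2) (hblock p.1)
  · -- image in ball
    rintro _ ⟨z, hz, rfl⟩
    rw [mem_ball_zero_iff]
    have hlt : ‖F z‖ ^ 2 < 1 := by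
      rw [hFnorm]
      have hstep : ∑ i, (t i) ^ 2 * ‖f i (blockOf z i)‖ ^ 2 < ∑ i, (t i) ^ 2 := by
        refine Finset.sum_lt_sum_of_nonempty Finset.univ_nonempty fun i _ => ?_
        have h1 : ‖f i (blockOf z i)‖ < 1 :=
          mem_ball_zero_iff.1 (him i ⟨blockOf z i, hz i, rfl⟩)
        have h2 : ‖f i (blockOf z i)‖ ^ 2 < 1 :=
          pow_lt_one₀ (norm_nonneg _) h1 two_ne_zero
        calc (t i) ^ 2 * ‖f i (blockOf z i)‖ ^ 2 < (t i) ^ 2 * 1 := by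
              exact mul_lt_mul_of_pos_left h2 (pow_pos (htpos i) 2)
          _ = (t i) ^ 2 := mul_one _
      have hteq : ∑ i, (t i) ^ 2 = ∑ i, c ^ 2 * ((r i)⁻¹) ^ 2 := by
        refine Finset.sum_congr rfl fun i _ => ?_
        rw [htdef]
        rw [div_pow, div_eq_mul_inv, ← inv_pow]
      calc ∑ i, (t i) ^ 2 * ‖f i (blockOf z i)‖ ^ 2 < ∑ i, (t i) ^ 2 := hstep
        _ ≤ 1 := by rw [hteq]; exact hsum
    nlinarith [norm_nonneg (F z)]
  · -- F a = 0
    ext p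
    rw [hFapp, hfa p.1]
    show ((t p.1 : ℝ) : ℂ) * 0 = (0 : EuclideanSpace ℂ ((i : Fin k) × Fin (n i))) p
    simp
  · -- ball ⊆ image
    intro w hw
    rw [mem_ball_zero_iff] at hw
    have hblocknorm : ∀ i, ‖blockOf w i‖ ≤ ‖w‖ := by
      intro i
      rw [EuclideanSpace.norm_eq, EuclideanSpace.norm_eq]
      apply Real.sqrt_le_sqrt
      rw [← Finset.univ_sigma_univ, Finset.sum_sigma]
      exact Finset.single_le_sum
        (f := fun i' => ∑ j, ‖w ⟨i', j⟩‖ ^ 2) (fun i' _ => by positivity) (Finset.mem_univ i)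
    have hwi : ∀ i, (((t i : ℝ) : ℂ))⁻¹ • blockOf w i ∈
        ball (0 : EuclideanSpace ℂ (Fin (n i))) (r i) := by
      intro i
      rw [mem_ball_zero_iff, norm_smul, norm_inv, Complex.norm_real, Real.norm_eq_abs,
        abs_of_pos (htpos i)]
      have h1 : (t i)⁻¹ * ‖blockOf w i‖ ≤ (t i)⁻¹ * ‖w‖ :=
        mul_le_mul_of_nonneg_left (hblocknorm i) (inv_nonneg.2 (htpos i).le)
      have h2 : (t i)⁻¹ * ‖w‖ < (t i)⁻¹ * c :=
        mul_lt_mul_of_pos_left hw (inv_pos.2 (htpos i))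
      have h3 : (t i)⁻¹ * c = r i := by
        rw [htdef]
        field_simp
      linarith
    choose zz hzz hfzz using fun i => hball i (hwi i)
    refine ⟨(WithLp.toLp 2 (fun p : (i : Fin k) × Fin (n i) => zz p.1 p.2) : EuclideanSpace ℂ ((i : Fin k) × Fin (n i))),
      fun i => ?_, ?_⟩
    · exact hzz i
    · ext p
      rw [hFapp]
      have hb : blockOf (WithLp.toLp 2 (fun q : (i : Fin k) × Fin (n i) => zz q.1 q.2) : EuclideanSpace ℂ ((i : Fin k) × Fin (n i))) p.1
          = zz p.1 := rfl
      rw [hb, hfzz p.1]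
      show ((t p.1 : ℝ) : ℂ) * ((((t p.1 : ℝ) : ℂ))⁻¹ * blockOf w p.1 p.2) = w p
      rw [← mul_assoc, mul_inv_cancel₀ (htC p.1), one_mul]
      rfl

end Aux

lemma squeezingS_eq {ι : Type*} [Fintype ι] (Ω : Set (EuclideanSpace ℂ ι))
    (z : EuclideanSpace ℂ ι) : squeezingS Ω z = sSup (sqSet Ω z) := rfl

/-- Lower bound for the ball-squeezing function of a product domain:
`S_Ω(a) ≥ (∑ᵢ S_{Ωᵢ}(aᵢ)⁻²)^{-1/2}`. -/
theorem squeezingS_product_lower_bound (k : ℕ) (hk : 0 < k) (n : Fin k → ℕ)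
    (Ω : ∀ i, Set (EuclideanSpace ℂ (Fin (n i)))) (hΩ : ∀ i, IsBoundedDomain (Ω i))
    (a : EuclideanSpace ℂ ((i : Fin k) × Fin (n i))) (ha : a ∈ prodDomain Ω) :
    squeezingS (prodDomain Ω) a ≥
      (Real.sqrt (∑ i, ((squeezingS (Ω i) (blockOf a i))⁻¹) ^ 2))⁻¹ := by
  classical
  haveI : Nonempty (Fin k) := ⟨⟨0, hk⟩⟩
  set S : Fin k → ℝ := fun i => squeezingS (Ω i) (blockOf a i) with hSdef
  have hSS : ∀ i, S i = sSup (sqSet (Ω i) (blockOf a i)) := fun _ => rfl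
  by_contra hcon
  push_neg at hcon
  rw [squeezingS_eq] at hcon
  set Sig : ℝ := ∑ i, ((S i)⁻¹) ^ 2 with hSigdef
  have hSignonneg : 0 ≤ Sig := by positivity
  have hsup_nonneg : 0 ≤ sSup (sqSet (prodDomain Ω) a) :=
    Real.sSup_nonneg (fun x hx => hx.1.le)
  have hc_pos : 0 < (Real.sqrt Sig)⁻¹ := lt_of_le_of_lt hsup_nonneg hcon
  have hSigpos : 0 < Sig := by
    rcases lt_or_eq_of_le hSignonneg with h | h
    · exact h
    · rw [← h, Real.sqrt_zero, _root_.inv_zero] at hc_pos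
      exact absurd hc_pos (lt_irrefl 0)
  have hex : ∃ i₀, S i₀ ≠ 0 := by
    by_contra h
    push_neg at h
    have : Sig = 0 := by
      rw [hSigdef]
      refine Finset.sum_eq_zero fun i _ => ?_
      rw [h i, _root_.inv_zero]
      norm_num
    exact absurd this hSigpos.ne'
  obtain ⟨i₀, hi₀⟩ := hex
  have hbdd₀ : BddAbove (sqSet (Ω i₀) (blockOf a i₀)) := by
    by_contra h
    exact hi₀ (Real.sSup_of_not_bddAbove h)
  haveI hne₀ : Nonempty (Fin (n i₀)) := by
    by_contra h
    haveI : IsEmpty (Fin (n i₀)) := not_nonempty_iff.1 h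
    obtain ⟨b, hb⟩ := hbdd₀
    have h1 : max b 0 + 1 ∈ sqSet (Ω i₀) (blockOf a i₀) :=
      sqSet_of_isEmpty _ (ha i₀) (by positivity)
    have h2 := hb h1
    have h3 := le_max_left b 0
    linarith [le_max_left b (0:ℝ)]
  haveI : Nonempty ((i : Fin k) × Fin (n i)) := ⟨⟨i₀, Classical.arbitrary _⟩⟩
  obtain ⟨c', hc1, hc2⟩ := exists_between hcon
  have hc'pos : 0 < c' := lt_of_le_of_lt hsup_nonneg hc1
  have hkey : Sig < (c'⁻¹) ^ 2 := by
    have h1 : Real.sqrt Sig < c'⁻¹ := by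
      rw [show Real.sqrt Sig = ((Real.sqrt Sig)⁻¹)⁻¹ from (inv_inv _).symm]
      exact inv_strictAnti₀ hc'pos hc2
    calc Sig = (Real.sqrt Sig) ^ 2 := (Real.sq_sqrt hSignonneg).symm
      _ < (c'⁻¹) ^ 2 := pow_lt_pow_left₀ h1 (Real.sqrt_nonneg _) two_ne_zero
  set ε : ℝ := ((c'⁻¹) ^ 2 - Sig) / k with hεdef
  have hεpos : 0 < ε := by
    apply div_pos (by linarith)
    exact_mod_cast hk
  choose r hrmem hrlt using fun i =>
    sqSet_exists_close (Ω i) (hΩ i).1 (hΩ i).2.2 (ha i) hεpos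
  have hsum : ∑ i, c' ^ 2 * ((r i)⁻¹) ^ 2 ≤ 1 := by
    have h1 : ∑ i, ((r i)⁻¹) ^ 2 < ∑ i, (((S i)⁻¹) ^ 2 + ε) :=
      Finset.sum_lt_sum_of_nonempty Finset.univ_nonempty fun i _ => by
        have := hrlt i
        rw [← hSS i] at this
        exact this
    have h2 : ∑ i, (((S i)⁻¹) ^ 2 + ε) = Sig + k * ε := by
      rw [Finset.sum_add_distrib, Finset.sum_const, Finset.card_univ, Fintype.card_fin,
        nsmul_eq_mul, hSigdef]
    have h3 : Sig + (k : ℝ) * ε = (c'⁻¹) ^ 2 := by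
      rw [hεdef]
      have hk' : (k : ℝ) ≠ 0 := Nat.cast_ne_zero.2 hk.ne'
      field_simp
      ring
    have h4 : ∑ i, ((r i)⁻¹) ^ 2 ≤ (c'⁻¹) ^ 2 := by
      rw [← h3, ← h2]; exact h1.le
    calc ∑ i, c' ^ 2 * ((r i)⁻¹) ^ 2 = c' ^ 2 * ∑ i, ((r i)⁻¹) ^ 2 := by
          rw [Finset.mul_sum]
      _ ≤ c' ^ 2 * (c'⁻¹) ^ 2 := mul_le_mul_of_nonneg_left h4 (by positivity)
      _ = 1 := by
          rw [← mul_pow, mul_inv_cancel₀ hc'pos.ne']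
          norm_num
  have hmem := construction hk Ω a ha hc'pos hrmem hsum
  have hle : c' ≤ sSup (sqSet (prodDomain Ω) a) :=
    le_csSup (sqSet_bddAbove _ _) hmem
  exact absurd hc1 (not_lt.2 hle)
end
end

section
/- Let Ω₁,…,Ω_k with Ω_i ⊆ ℂ^{n_i} be bounded domains, each of which is holomorphic homogeneous regular, i.e., for each i there is c_i > 0 with T_{Ω_i}(z) ≥ c_i for all z ∈ Ω_i. Then the product Ω = Ω₁ × Ω₂ × ⋯ × Ω_k ⊆ ℂⁿ, n = n₁ + ⋯ + n_k, is holomorphic homogeneous regular: there is c > 0 with T_Ω(a) ≥ c for all a ∈ Ω. -/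
open Metric Set Matrix
open scoped ComplexOrder

noncomputable section

lemma exists_half_lt {S : Set ℝ} {cc : ℝ} (hcc : 0 < cc) (h : cc ≤ sSup S) :
    ∃ r ∈ S, cc / 2 < r := by
  have hne : S.Nonempty := by
    by_contra h'
    rw [Set.not_nonempty_iff_eq_empty] at h'
    rw [h', Real.sSup_empty] at h
    linarith
  by_contra h'
  push_neg at h'
  have : sSup S ≤ cc / 2 := Real.sSup_le h' (by linarith)
  linarith

lemma squeezingT_of_isEmpty {ι : Type*} [Fintype ι] [IsEmpty ι]
    (Ω : Set (EuclideanSpace ℂ ι)) (z : EuclideanSpace ℂ ι) (hz : z ∈ Ω) :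
    squeezingT Ω z = 0 := by
  haveI : Subsingleton (EuclideanSpace ℂ ι) := by
    constructor; intro x y; ext i; exact isEmptyElim i
  apply Real.sSup_of_not_bddAbove
  rintro ⟨M, hM⟩
  have h1 : max M 0 + 1 ∈ {r : ℝ | 0 < r ∧ ∃ f : EuclideanSpace ℂ ι → EuclideanSpace ℂ ι,
      DifferentiableOn ℂ f Ω ∧ Set.InjOn f Ω ∧ f '' Ω ⊆ polydisk ι 1 ∧
      f z = 0 ∧ polydisk ι (max M 0 + 1) ⊆ f '' Ω} := by
    refine ⟨by positivity, fun _ => 0, differentiableOn_const 0,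
      fun x _ y _ _ => Subsingleton.elim x y, ?_, Subsingleton.elim _ _, ?_⟩
    · rintro w ⟨x, _, rfl⟩; exact fun i => isEmptyElim i
    · intro w _; exact ⟨z, hz, Subsingleton.elim _ _⟩
  have h2 : M ≤ max M 0 := le_max_left _ _
  linarith [hM h1]

lemma squeezing_set_bddAbove {ι : Type*} [Fintype ι] [Nonempty ι]
    (Ω : Set (EuclideanSpace ℂ ι)) (z : EuclideanSpace ℂ ι) :
    BddAbove {r : ℝ | 0 < r ∧ ∃ f : EuclideanSpace ℂ ι → EuclideanSpace ℂ ι,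
      DifferentiableOn ℂ f Ω ∧ Set.InjOn f Ω ∧ f '' Ω ⊆ polydisk ι 1 ∧
      f z = 0 ∧ polydisk ι r ⊆ f '' Ω} := by
  refine ⟨1, ?_⟩
  rintro r ⟨hr0, f, _, _, hsub, _, hpoly⟩
  by_contra h
  push_neg at h
  set s : ℝ := (1 + r) / 2 with hs
  have hs1 : 1 < s := by simp only [hs]; linarith
  have hsr : s < r := by simp only [hs]; linarith
  have hw : (WithLp.toLp 2 (fun _ => (s : ℂ)) : EuclideanSpace ℂ ι) ∈ polydisk ι r := by
    intro i
    simpa [Complex.norm_real, abs_of_pos (by linarith : (0:ℝ) < s)] using hsr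
  have := hsub (hpoly hw) (Classical.arbitrary ι)
  simp [Complex.norm_real, abs_of_pos (by linarith : (0:ℝ) < s)] at this
  linarith

/-- A product of holomorphic homogeneous regular domains is holomorphic homogeneous
regular: if each `T_{Ωᵢ}` has a positive lower bound, then so does `T_Ω` on the product. -/
theorem product_holomorphic_homogeneous_regular (k : ℕ) (hk : 0 < k) (n : Fin k → ℕ)
    (Ω : ∀ i, Set (EuclideanSpace ℂ (Fin (n i)))) (hΩ : ∀ i, IsBoundedDomain (Ω i))
    (hbdd : ∀ i, ∃ c : ℝ, 0 < c ∧ ∀ z ∈ Ω i, c ≤ squeezingT (Ω i) z) :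
    ∃ c : ℝ, 0 < c ∧ ∀ a ∈ prodDomain Ω, c ≤ squeezingT (prodDomain Ω) a := by
  choose c hc hcle using hbdd
  have hn : ∀ i, 0 < n i := by
    intro i
    by_contra h
    push_neg at h
    have hni : n i = 0 := by omega
    haveI : IsEmpty (Fin (n i)) := by rw [hni]; infer_instance
    obtain ⟨z, hz⟩ := (hΩ i).2.1.nonempty
    have h2 := hcle i z hz
    rw [squeezingT_of_isEmpty _ _ hz] at h2
    linarith [hc i]
  haveI : Nonempty (Fin k) := ⟨⟨0, hk⟩⟩
  haveI : Nonempty ((i : Fin k) × Fin (n i)) := ⟨⟨⟨0, hk⟩, ⟨0, hn _⟩⟩⟩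
  set C : ℝ := Finset.univ.inf' Finset.univ_nonempty (fun i : Fin k => c i / 2) with hCdef
  have hC0 : 0 < C := by
    rw [hCdef, Finset.lt_inf'_iff]
    intro i _
    linarith [hc i]
  have hCle : ∀ i, C ≤ c i / 2 := fun i => Finset.inf'_le _ (Finset.mem_univ i)
  refine ⟨C, hC0, ?_⟩
  intro a ha
  have H : ∀ i, ∃ r, (0 < r ∧ ∃ f, DifferentiableOn ℂ f (Ω i) ∧ Set.InjOn f (Ω i) ∧
      f '' (Ω i) ⊆ polydisk (Fin (n i)) 1 ∧ f (blockOf a i) = 0 ∧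
      polydisk (Fin (n i)) r ⊆ f '' (Ω i)) ∧ c i / 2 < r :=
    fun i => exists_half_lt (hc i) (hcle i _ (ha i))
  choose r hr hrc using H
  choose f hdiff hinj hsub hzero hpoly using fun i => (hr i).2
  set F : EuclideanSpace ℂ ((i : Fin k) × Fin (n i)) →
      EuclideanSpace ℂ ((i : Fin k) × Fin (n i)) :=
    fun z => WithLp.toLp 2 (fun idx : (i : Fin k) × Fin (n i) => f idx.1 (blockOf z idx.1) idx.2) with hF
  have hblock : ∀ i, Differentiable ℂ
      (fun z : EuclideanSpace ℂ ((i : Fin k) × Fin (n i)) => blockOf z i) := by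
    intro i
    rw [differentiable_euclidean]
    intro j
    exact (EuclideanSpace.proj (𝕜 := ℂ) (⟨i, j⟩ : (i : Fin k) × Fin (n i))).differentiable
  apply le_csSup (squeezing_set_bddAbove _ _)
  refine ⟨hC0, F, ?_, ?_, ?_, ?_, ?_⟩
  · refine differentiableOn_euclidean.mpr ?_
    rintro ⟨i, j⟩
    exact ((differentiableOn_euclidean.mp (hdiff i)) j).comp
      (hblock i).differentiableOn (fun z hz => hz i)
  · intro z hz w hw h
    ext idx
    obtain ⟨i, j⟩ := idx
    have hfe : f i (blockOf z i) = f i (blockOf w i) := PiLp.ext fun j' => congrArg (fun v => v ⟨i, j'⟩) h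
    exact congrArg (fun v => v j) (hinj i (hz i) (hw i) hfe)
  · rintro _ ⟨z, hz, rfl⟩ ⟨i, j⟩
    exact hsub i ⟨blockOf z i, hz i, rfl⟩ j
  · ext idx
    obtain ⟨i, j⟩ := idx
    show f i (blockOf a i) j = 0
    rw [hzero i]
    rfl
  · intro w hw
    have hwb : ∀ i, blockOf w i ∈ polydisk (Fin (n i)) (r i) := by
      intro i j
      calc ‖w ⟨i, j⟩‖ < C := hw ⟨i, j⟩
        _ ≤ c i / 2 := hCle i
        _ < r i := hrc i
    have hex : ∀ i, ∃ zi ∈ Ω i, f i zi = blockOf w i := fun i => hpoly i (hwb i)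
    choose zi hzi hfz using hex
    refine ⟨WithLp.toLp 2 (fun idx : (i : Fin k) × Fin (n i) => zi idx.1 idx.2), fun i => hzi i, ?_⟩
    ext idx
    obtain ⟨i, j⟩ := idx
    exact congrArg (fun v => v j) (hfz i)
end
end
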